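/- Let p be a prime and let K = K_0 ⊂ K_1 ⊂ ⋯ ⊂ K_n be a sufficiently ramified tower of local fields of characteristic (0,p); assume moreover that K_n/K is Galois with Gal(K_n/K) cyclic of order p^n generated by σ, and that K_m is the fixed field of σ^{p^m} for each 0 ≤ m ≤ n. Let t = p^{−n}·tr_{K_n/K} and K_n^{t=0} = {x ∈ K_n : t(x) = 0}. Let λ ∈ ℤ_p (viewed in K) with v(λ − 1) ≥ 2. Then the K-linear operator σ − λ maps K_n^{t=0} bijectively onto itself, and for every y ∈ K_n^{t=0} the unique x ∈ K_n^{t=0} with σ(x) − λx = y satisfies v(x) ≥ v(y) − 1 − 1/(p(p−1)). -/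

import Mathlib

/-- Data exhibiting `L` as a local field of characteristic `(0, p)`: a multiplicative
nonarchimedean absolute value `a` (representing the absolute valuation `v` via
`a x = c ^ v x` for a base `0 < c < 1`), a uniformizer `ϖ` generating the (discrete)
value group, residue characteristic `p` (`a p < 1`), completeness, and perfectness of
the residue field (surjectivity of the `p`-power map on residues). -/
structure LocalFieldData (p : ℕ) (L : Type*) [Field L] where
  a : L → ℝ
  a_zero : a 0 = 0
  a_pos : ∀ x : L, x ≠ 0 → 0 < a x
  a_mul : ∀ x y : L, a (x * y) = a x * a y
  a_add : ∀ x y : L, a (x + y) ≤ max (a x) (a y)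
  ϖ : L
  ϖ_pos : 0 < a ϖ
  ϖ_lt_one : a ϖ < 1
  disc : ∀ x : L, x ≠ 0 → ∃ k : ℤ, a x = a ϖ ^ k
  res_char : a (p : L) < 1
  complete : ∀ u : ℕ → L,
    (∀ ε : ℝ, 0 < ε → ∃ N : ℕ, ∀ m ≥ N, ∀ n ≥ N, a (u m - u n) < ε) →
    ∃ l : L, ∀ ε : ℝ, 0 < ε → ∃ N : ℕ, ∀ n ≥ N, a (u n - l) < ε
  perfect_res : ∀ x : L, a x ≤ 1 → ∃ y : L, a y ≤ 1 ∧ a (x - y ^ p) < 1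

/-- The normalized trace `t = p⁻ⁿ · tr_{K_n/K}` for a Galois extension `L = K_n` of `K`
whose Galois group is cyclic of order `pⁿ` generated by `σ`:
`t x = p⁻ⁿ ∑_{j < pⁿ} σʲ x`. -/
noncomputable def normTrace (p n : ℕ) {K L : Type*} [Field K] [Field L] [Algebra K L]
    (σ : L ≃ₐ[K] L) (x : L) : L :=
  ((p : L) ^ n)⁻¹ * ∑ j ∈ Finset.range (p ^ n), (σ ^ j) x

namespace LocalFieldData

variable {p : ℕ} {L : Type*} [Field L] (D : LocalFieldData p L)

lemma a_nonneg (x : L) : 0 ≤ D.a x := by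
  rcases eq_or_ne x 0 with h | h
  · simp [h, D.a_zero]
  · exact (D.a_pos x h).le

lemma a_one : D.a 1 = 1 := by
  have h := D.a_mul 1 1
  rw [mul_one] at h
  have h1 : (0:ℝ) < D.a 1 := D.a_pos 1 one_ne_zero
  nlinarith [h, h1]

lemma a_neg (x : L) : D.a (-x) = D.a x := by
  have hm : D.a (-1 : L) = 1 := by
    have h := D.a_mul (-1) (-1)
    have h1 : (0:ℝ) < D.a (-1 : L) := D.a_pos _ (by norm_num)
    have : D.a ((-1 : L) * (-1)) = D.a (1 : L) := by norm_num
    rw [this, D.a_one] at h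
    nlinarith
  calc D.a (-x) = D.a ((-1) * x) := by ring_nf
    _ = D.a x := by rw [D.a_mul, hm, one_mul]

lemma a_sub (x y : L) : D.a (x - y) ≤ max (D.a x) (D.a y) := by
  have := D.a_add x (-y)
  rwa [← sub_eq_add_neg, D.a_neg] at this

lemma a_inv (x : L) : D.a x⁻¹ = (D.a x)⁻¹ := by
  rcases eq_or_ne x 0 with h | h
  · simp [h, D.a_zero]
  · have h1 : D.a x⁻¹ * D.a x = 1 := by
      rw [← D.a_mul, inv_mul_cancel₀ h, D.a_one]
    exact eq_inv_of_mul_eq_one_left h1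

lemma a_pow (x : L) (k : ℕ) : D.a (x ^ k) = D.a x ^ k := by
  induction k with
  | zero => simp [D.a_one]
  | succ k ih => rw [pow_succ, pow_succ, D.a_mul, ih]

lemma a_zpow (x : L) (k : ℤ) : D.a (x ^ k) = D.a x ^ k := by
  cases k with
  | ofNat k => simpa using D.a_pow x k
  | negSucc k =>
      rw [zpow_negSucc, zpow_negSucc, D.a_inv, D.a_pow]

lemma a_nat_le_one (m : ℕ) : D.a (m : L) ≤ 1 := by
  induction m with
  | zero => simp [D.a_zero]
  | succ m ih =>
      push_cast
      exact le_trans (D.a_add m 1) (by rw [D.a_one]; exact max_le ih le_rfl)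

lemma a_sum_le {ι : Type*} (s : Finset ι) (f : ι → L) (C : ℝ) (hC : 0 ≤ C)
    (h : ∀ i ∈ s, D.a (f i) ≤ C) : D.a (∑ i ∈ s, f i) ≤ C := by
  classical
  induction s using Finset.induction with
  | empty => simpa [D.a_zero] using hC
  | @insert j s hx ih =>
      rw [Finset.sum_insert hx]
      refine le_trans (D.a_add _ _) (max_le (h j (Finset.mem_insert_self j s)) ?_)
      exact ih fun i hi => h i (Finset.mem_insert_of_mem hi)

end LocalFieldData


section SumLemmas

variable {K L : Type*} [Field K] [Field L] [Algebra K L]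

lemma my_sum_split {M : Type*} [AddCommMonoid M] (g : ℕ → M) (a b : ℕ) :
    ∑ j ∈ Finset.range (a * b), g j
      = ∑ k ∈ Finset.range b, ∑ i ∈ Finset.range a, g (a * k + i) := by
  induction b with
  | zero => simp
  | succ b ih =>
      rw [Nat.mul_succ, Finset.sum_range_add, ih, Finset.sum_range_succ]

lemma my_fix_pow (τ : L ≃ₐ[K] L) (z : L) (hz : τ z = z) (k : ℕ) : (τ ^ k) z = z := by
  induction k with
  | zero => simp
  | succ k ih => rw [pow_succ, AlgEquiv.mul_apply, hz, ih]

lemma my_pow_comm (σ : L ≃ₐ[K] L) (c : ℕ) (x : L) : (σ ^ c) (σ x) = σ ((σ ^ c) x) := by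
  rw [← AlgEquiv.mul_apply, ← AlgEquiv.mul_apply, pow_mul_comm']

lemma my_telescope (σ : L ≃ₐ[K] L) (c m : ℕ) (x : L) :
    ∑ i ∈ Finset.range m, (σ ^ (c + i)) (σ x - x) = (σ ^ (c + m)) x - (σ ^ c) x := by
  have h : ∀ i, (σ ^ (c + i)) (σ x - x) = (σ ^ (c + (i + 1))) x - (σ ^ (c + i)) x := by
    intro i
    have h2 : (σ ^ (c + (i + 1))) x = (σ ^ (c + i)) (σ x) := by
      rw [← add_assoc, pow_succ]; rfl
    rw [map_sub, h2]
  calc ∑ i ∈ Finset.range m, (σ ^ (c + i)) (σ x - x)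
      = ∑ i ∈ Finset.range m, ((σ ^ (c + (i + 1))) x - (σ ^ (c + i)) x) :=
        Finset.sum_congr rfl fun i _ => h i
    _ = (σ ^ (c + m)) x - (σ ^ (c + 0)) x :=
        Finset.sum_range_sub (fun i => (σ ^ (c + i)) x) m
    _ = (σ ^ (c + m)) x - (σ ^ c) x := by rw [add_zero]

lemma my_abel (f : ℕ → L) (N : ℕ) (x : L) (hf0 : f 0 = x) (hfN : f N = x)
    (hsum : ∑ j ∈ Finset.range N, f j = 0) :
    ∑ j ∈ Finset.range N, (j : L) * (f (j + 1) - f j) = (N : L) * x := by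
  have e1 : ∀ j : ℕ, (j : L) * (f (j + 1) - f j)
      = (((j + 1 : ℕ) : L) * f (j + 1) - f (j + 1)) - (j : L) * f j := by
    intro j; push_cast; ring
  rw [Finset.sum_congr rfl fun j _ => e1 j, Finset.sum_sub_distrib, Finset.sum_sub_distrib]
  have h1 : ∑ j ∈ Finset.range N, ((j + 1 : ℕ) : L) * f (j + 1)
      = ∑ j ∈ Finset.range N, (j : L) * f j + (N : L) * x := by
    have h := Finset.sum_range_succ' (fun j => (j : L) * f j) N
    have h' := Finset.sum_range_succ (fun j => (j : L) * f j) N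
    rw [h'] at h
    simpa [hfN] using h.symm
  have h2 : ∑ j ∈ Finset.range N, f (j + 1) = 0 := by
    have h := Finset.sum_range_succ' f N
    have h' := Finset.sum_range_succ f N
    rw [h'] at h
    rw [hsum, hf0, hfN] at h
    linear_combination -h
  rw [h1, h2]
  ring

lemma my_piece_identity (σ : L ≃ₐ[K] L) (c N : ℕ) (x : L)
    (hA : (σ ^ (c * N)) x = x)
    (hB : ∑ j ∈ Finset.range N, (σ ^ (c * j)) x = 0) :
    (N : L) * x = ∑ j ∈ Finset.range N, (j : L) *
      ∑ i ∈ Finset.range c, (σ ^ (c * j + i)) (σ x - x) := by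
  have hterm : ∀ j : ℕ, (j : L) * ∑ i ∈ Finset.range c, (σ ^ (c * j + i)) (σ x - x)
      = (j : L) * ((σ ^ (c * (j + 1))) x - (σ ^ (c * j)) x) := by
    intro j
    rw [my_telescope σ (c * j) c x, Nat.mul_succ]
  rw [Finset.sum_congr rfl fun j _ => hterm j]
  exact (my_abel (fun j => (σ ^ (c * j)) x) N x (by simp) (by simpa using hA) hB).symm

lemma my_piece_bound {pp : ℕ} (D : LocalFieldData pp L) (σ : L ≃ₐ[K] L)
    (hinv : ∀ x : L, D.a (σ x) = D.a x) (c N : ℕ) (x : L)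
    (hA : (σ ^ (c * N)) x = x)
    (hB : ∑ j ∈ Finset.range N, (σ ^ (c * j)) x = 0) :
    D.a ((N : L)) * D.a x ≤ D.a (σ x - x) := by
  have hapow : ∀ (k : ℕ) (z : L), D.a ((σ ^ k) z) = D.a z := by
    intro k z
    induction k with
    | zero => simp
    | succ k ih => rw [pow_succ, AlgEquiv.mul_apply, my_pow_comm, hinv, ih]
  rw [← D.a_mul, my_piece_identity σ c N x hA hB]
  apply D.a_sum_le _ _ _ (D.a_nonneg _)
  intro j _
  rw [D.a_mul]
  calc D.a ((j : L)) * D.a (∑ i ∈ Finset.range c, (σ ^ (c * j + i)) (σ x - x))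
      ≤ 1 * D.a (σ x - x) := by
        apply mul_le_mul (D.a_nat_le_one j) ?_ (D.a_nonneg _) zero_le_one
        apply D.a_sum_le _ _ _ (D.a_nonneg _)
        intro i _
        rw [hapow]
    _ = D.a (σ x - x) := one_mul _

end SumLemmas


set_option maxHeartbeats 1600000 in
/-- With `K = K_0 ⊂ ⋯ ⊂ K_n = L` a sufficiently ramified tower of local
fields of characteristic `(0,p)`, `Gal(K_n/K)` cyclic of order `pⁿ` generated by `σ`,
`K_m` the fixed field of `σ^(p^m)`, `t = p⁻ⁿ tr_{K_n/K}` the normalized trace, and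
`K_n^{t=0} = {x : t x = 0}`:  for `λ ∈ ℤ_p` (viewed in `K`, i.e. a limit of integers)
with `v(λ - 1) ≥ 2`, the `K`-linear operator `σ - λ` maps `K_n^{t=0}` bijectively onto
itself, and the unique solution `x ∈ K_n^{t=0}` of `σ x - λ x = y` (for `y ∈ K_n^{t=0}`)
satisfies `v(x) ≥ v(y) - 1 - 1/(p(p-1))`, i.e. `|x| ≤ |p| ^ (-(1 + 1/(p(p-1)))) * |y|`. -/
theorem sigma_sub_lambda_bijective_on_trace_zero
    (p n : ℕ) (hp : p.Prime) (hn : 1 ≤ n)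
    (K L : Type*) [Field K] [Field L] [CharZero K] [CharZero L] [Algebra K L]
    [IsGalois K L] [FiniteDimensional K L]
    (hdeg : Module.finrank K L = p ^ n)
    (σ : L ≃ₐ[K] L) (hσ : orderOf σ = p ^ n)
    (D : LocalFieldData p L)
    (hinv : ∀ x : L, D.a (σ x) = D.a x)
    (ϖ : ℕ → L)
    (hϖmem : ∀ m ≤ n, (σ ^ p ^ m) (ϖ m) = ϖ m)
    (hϖpos : ∀ m ≤ n, 0 < D.a (ϖ m))
    (hϖ1 : ∀ m ≤ n, D.a (ϖ m) < 1)
    (hdisc : ∀ m ≤ n, ∀ x : L, (σ ^ p ^ m) x = x → x ≠ 0 → ∃ k : ℤ, D.a x = D.a (ϖ m) ^ k)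
    (e : ℕ) (he1 : 1 ≤ e) (he : D.a ((p : L)) = D.a (ϖ 0) ^ e)
    (htot : ∀ m : ℕ, 1 ≤ m → m ≤ n → D.a (ϖ (m - 1)) = D.a (ϖ m) ^ p)
    (hdiff : ∀ m : ℕ, 1 ≤ m → m ≤ n → ∃ dd : ℕ,
      ((e : ℝ) * ((p : ℝ) ^ m - 1) + ((p : ℝ) - 1) ≤ (dd : ℝ)) ∧
      ∀ x : L, (σ ^ p ^ m) x = x →
        ((∀ y : L, (σ ^ p ^ m) y = y → D.a y ≤ 1 →
            D.a (∑ j ∈ Finset.range p, (σ ^ (p ^ (m - 1) * j)) (x * y)) ≤ 1) ↔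
          D.a x ≤ D.a (ϖ m) ^ (-(dd : ℤ))))
    -- `λ` is an element of `ℤ_p ⊆ 𝒪_K`, i.e. a limit of (the images of) rational integers
    (lam : K)
    (hlam_int : ∀ ε : ℝ, 0 < ε → ∃ m : ℤ, D.a (algebraMap K L lam - (m : L)) < ε)
    -- `v(λ - 1) ≥ 2`
    (hlam : D.a (algebraMap K L lam - 1) ≤ D.a ((p : L)) ^ (2 : ℕ)) :
    (∀ x : L, normTrace p n σ x = 0 →
        normTrace p n σ (σ x - algebraMap K L lam * x) = 0) ∧
      (∀ y : L, normTrace p n σ y = 0 →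
        ∃! x : L, normTrace p n σ x = 0 ∧ σ x - algebraMap K L lam * x = y) ∧
      (∀ x y : L, normTrace p n σ x = 0 → normTrace p n σ y = 0 →
        σ x - algebraMap K L lam * x = y →
        D.a x ≤ D.a ((p : L)) ^ (-(1 + ((p : ℝ) * ((p : ℝ) - 1))⁻¹)) * D.a y) := by
  classical
  have hp2 : 2 ≤ p := hp.two_le
  have hpL : (p : L) ≠ 0 := Nat.cast_ne_zero.mpr hp.ne_zero
  have hpLpow : ∀ k : ℕ, ((p : L) ^ k) ≠ 0 := fun k => pow_ne_zero k hpL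
  set q : ℝ := D.a (ϖ n) with hq_def
  have hq0 : 0 < q := hϖpos n le_rfl
  have hq1 : q < 1 := hϖ1 n le_rfl
  -- valuation of the uniformizers
  have hϖ_val : ∀ j ≤ n, D.a (ϖ (n - j)) = q ^ (p ^ j) := by
    intro j hj
    induction j with
    | zero => simp [hq_def]
    | succ j ih =>
        have h1 : 1 ≤ n - j := by omega
        have h2 : n - j ≤ n := by omega
        have hnj : n - (j + 1) = (n - j) - 1 := by omega
        rw [hnj, htot (n - j) h1 h2, ih (by omega), ← pow_mul, ← pow_succ]
  have hσpn : σ ^ (p ^ n) = 1 := by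
    have h := pow_orderOf_eq_one σ
    rwa [hσ] at h
  set E : ℕ := e * p ^ n with hE_def
  have hAP : D.a ((p : L)) = q ^ E := by
    have h0 : D.a (ϖ 0) = q ^ (p ^ n) := by
      have := hϖ_val n le_rfl
      simpa using this
    rw [he, h0, ← pow_mul, mul_comm (p ^ n) e]
  have hAP0 : 0 < D.a ((p : L)) := D.a_pos _ hpL
  -- the partial normalized trace operators
  set R : ℕ → L → L := fun m x =>
    ((p : L) ^ (n - m))⁻¹ * ∑ j ∈ Finset.range (p ^ (n - m)), (σ ^ (p ^ m * j)) x with hR_def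
  have hR0 : ∀ x, R 0 x = normTrace p n σ x := by
    intro x; simp [hR_def, normTrace]
  have hRn : ∀ x, R n x = x := by
    intro x; simp [hR_def]
  have hR_sub : ∀ m (x y : L), R m (x - y) = R m x - R m y := by
    intro m x y
    simp [hR_def, map_sub, Finset.sum_sub_distrib, mul_sub]
  have hR_sigma : ∀ m (x : L), R m (σ x) = σ (R m x) := by
    intro m x
    simp only [hR_def]
    rw [map_mul, map_inv₀, map_pow, map_natCast, map_sum]
    congr 1
    exact Finset.sum_congr rfl fun j _ => (my_pow_comm σ _ x)
  have hR_fix_elem : ∀ m (x : L), (σ ^ (p ^ m)) x = x → R m x = x := by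
    intro m x hx
    have hterm : ∀ j, (σ ^ (p ^ m * j)) x = x := by
      intro j; rw [pow_mul]; exact my_fix_pow _ x hx j
    simp only [hR_def, hterm]
    rw [Finset.sum_const, Finset.card_range, nsmul_eq_mul, ← mul_assoc]
    rw [Nat.cast_pow, inv_mul_cancel₀ (hpLpow _), one_mul]
  have hR_fix : ∀ m ≤ n, ∀ x : L, (σ ^ (p ^ m)) (R m x) = R m x := by
    intro m hm x
    simp only [hR_def]
    rw [map_mul, map_inv₀, map_pow, map_natCast, map_sum]
    congr 1
    have hterm : ∀ j, (σ ^ (p ^ m)) ((σ ^ (p ^ m * j)) x) = (σ ^ (p ^ m * (j + 1))) x := by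
      intro j
      rw [← AlgEquiv.mul_apply, ← pow_add]
      congr 2
      ring
    rw [Finset.sum_congr rfl fun j _ => hterm j]
    have hfN : (σ ^ (p ^ m * p ^ (n - m))) x = x := by
      rw [← pow_add]
      have : m + (n - m) = n := by omega
      rw [this, hσpn]; rfl
    have h := Finset.sum_range_succ' (fun j => (σ ^ (p ^ m * j)) x) (p ^ (n - m))
    have h' := Finset.sum_range_succ (fun j => (σ ^ (p ^ m * j)) x) (p ^ (n - m))
    rw [h'] at h
    simpa [hfN] using h.symm
  have hR_split : ∀ m, 1 ≤ m → m ≤ n → ∀ x : L,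
      R (m - 1) x = (p : L)⁻¹ * ∑ j ∈ Finset.range p, (σ ^ (p ^ (m - 1) * j)) (R m x) := by
    intro m hm1 hm2 x
    have hkey : ∑ j' ∈ Finset.range (p ^ (n - (m - 1))), (σ ^ (p ^ (m - 1) * j')) x
        = ∑ j ∈ Finset.range p, ∑ k ∈ Finset.range (p ^ (n - m)),
            (σ ^ (p ^ (m - 1) * j + p ^ m * k)) x := by
      have hnm : n - (m - 1) = (n - m) + 1 := by omega
      rw [hnm, pow_succ', my_sum_split (fun j' => (σ ^ (p ^ (m - 1) * j')) x) p (p ^ (n - m)),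
        Finset.sum_comm]
      refine Finset.sum_congr rfl fun j _ => Finset.sum_congr rfl fun k _ => ?_
      congr 2
      have hpm : p ^ m = p ^ (m - 1) * p := by
        rw [← pow_succ]
        congr 1
        omega
      rw [hpm]
      ring
    have hterm : ∀ j, (σ ^ (p ^ (m - 1) * j)) (R m x)
        = ((p : L) ^ (n - m))⁻¹ * ∑ k ∈ Finset.range (p ^ (n - m)),
            (σ ^ (p ^ (m - 1) * j + p ^ m * k)) x := by
      intro j
      simp only [hR_def]
      rw [map_mul, map_inv₀, map_pow, map_natCast, map_sum]
      congr 1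
      refine Finset.sum_congr rfl fun k _ => ?_
      rw [← AlgEquiv.mul_apply, ← pow_add]
    simp only [hR_def]
    rw [Finset.sum_congr rfl fun j _ => hterm j, ← Finset.mul_sum, ← mul_assoc, hkey]
    congr 1
    have hnm : n - (m - 1) = (n - m) + 1 := by omega
    rw [hnm, pow_succ']
    rw [mul_inv]
  -- the key ramification estimate for the trace at each level
  have htr : ∀ m, 1 ≤ m → m ≤ n → ∀ w : L, (σ ^ (p ^ m)) w = w →
      D.a (∑ j ∈ Finset.range p, (σ ^ (p ^ (m - 1) * j)) w)
        ≤ D.a w * D.a (ϖ m) ^ ((e : ℤ) * ((p : ℤ) ^ m - 1)) := by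
    intro m hm1 hm2 w hwfix
    obtain ⟨dd, hdd1, hdd2⟩ := hdiff m hm1 hm2
    rcases eq_or_ne w 0 with rfl | hw
    · simp [D.a_zero]
    obtain ⟨w0, hw0⟩ := hdisc m hm2 w hwfix hw
    set qm : ℝ := D.a (ϖ m) with hqm_def
    have hqm0 : 0 < qm := hϖpos m hm2
    have hqm1 : qm < 1 := hϖ1 m hm2
    set k : ℤ := (-(dd : ℤ) - w0 + (p : ℤ) - 1) / (p : ℤ) with hk_def
    have hpZ : (0 : ℤ) < (p : ℤ) := by exact_mod_cast hp.pos
    have hdm := Int.mul_ediv_add_emod (-(dd : ℤ) - w0 + (p : ℤ) - 1) (p : ℤ)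
    have hmod0 := Int.emod_nonneg (-(dd : ℤ) - w0 + (p : ℤ) - 1) (ne_of_gt hpZ)
    have hmod1 := Int.emod_lt_of_pos (-(dd : ℤ) - w0 + (p : ℤ) - 1) hpZ
    have hpk1 : -(dd : ℤ) - w0 ≤ (p : ℤ) * k := by rw [hk_def]; omega
    have hpk2 : (p : ℤ) * k ≤ -(dd : ℤ) - w0 + (p : ℤ) - 1 := by rw [hk_def]; omega
    set c : L := ϖ (m - 1) ^ k with hc_def
    have hϖm1ne : ϖ (m - 1) ≠ 0 := by
      intro h
      have := hϖpos (m - 1) (by omega)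
      rw [h, D.a_zero] at this
      exact lt_irrefl _ this
    have hac : D.a c = qm ^ ((p : ℤ) * k) := by
      rw [hc_def, D.a_zpow, htot m hm1 hm2, ← zpow_natCast qm p, ← zpow_mul]
    have hfixc1 : (σ ^ (p ^ (m - 1))) c = c := by
      rw [hc_def, map_zpow₀, hϖmem (m - 1) (by omega)]
    have hfixcm : (σ ^ (p ^ m)) c = c := by
      have hsp : σ ^ (p ^ m) = (σ ^ (p ^ (m - 1))) ^ p := by
        rw [← pow_mul, ← pow_succ]
        congr 2
        omega
      rw [hsp]
      exact my_fix_pow _ c hfixc1 p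
    have hxfix : (σ ^ (p ^ m)) (w * c) = w * c := by rw [map_mul, hwfix, hfixcm]
    have hax : D.a (w * c) ≤ qm ^ (-(dd : ℤ)) := by
      rw [D.a_mul, hw0, hac, ← zpow_add₀ (ne_of_gt hqm0)]
      exact zpow_le_zpow_right_of_le_one₀ hqm0 hqm1.le (by omega)
    have hint := (hdd2 (w * c) hxfix).mpr hax 1 (map_one _) (by rw [D.a_one])
    have hsum_eq : ∑ j ∈ Finset.range p, (σ ^ (p ^ (m - 1) * j)) (w * c * 1)
        = (∑ j ∈ Finset.range p, (σ ^ (p ^ (m - 1) * j)) w) * c := by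
      rw [Finset.sum_mul]
      refine Finset.sum_congr rfl fun j _ => ?_
      rw [mul_one, map_mul]
      congr 1
      rw [pow_mul]
      exact my_fix_pow _ c hfixc1 j
    rw [hsum_eq, D.a_mul, hac] at hint
    have hs : (0 : ℝ) < qm ^ ((p : ℤ) * k) := zpow_pos hqm0 _
    have hT : D.a (∑ j ∈ Finset.range p, (σ ^ (p ^ (m - 1) * j)) w)
        ≤ qm ^ (-((p : ℤ) * k)) := by
      rw [zpow_neg, ← one_div, le_div_iff₀ hs]
      exact hint
    have hdd1' : (e : ℤ) * ((p : ℤ) ^ m - 1) + ((p : ℤ) - 1) ≤ (dd : ℤ) := by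
      have hcast : ((e : ℝ) * ((p : ℝ) ^ m - 1) + ((p : ℝ) - 1)) ≤ ((dd : ℕ) : ℝ) := hdd1
      exact_mod_cast hcast
    have hexp : w0 + (e : ℤ) * ((p : ℤ) ^ m - 1) ≤ -((p : ℤ) * k) := by linarith
    calc D.a (∑ j ∈ Finset.range p, (σ ^ (p ^ (m - 1) * j)) w)
        ≤ qm ^ (-((p : ℤ) * k)) := hT
      _ ≤ qm ^ (w0 + (e : ℤ) * ((p : ℤ) ^ m - 1)) :=
          zpow_le_zpow_right_of_le_one₀ hqm0 hqm1.le hexp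
      _ = D.a w * qm ^ ((e : ℤ) * ((p : ℤ) ^ m - 1)) := by
          rw [zpow_add₀ (ne_of_gt hqm0), hw0]
  -- accumulated loss exponents
  set Cexp : ℕ → ℤ := fun j => (e : ℤ) * ∑ k ∈ Finset.range j, (p : ℤ) ^ k with hCexp_def
  have hCexp_succ : ∀ j, Cexp (j + 1) = Cexp j + (e : ℤ) * (p : ℤ) ^ j := by
    intro j
    simp [hCexp_def, Finset.sum_range_succ, mul_add]
  have hCexp_nonneg : ∀ j, 0 ≤ Cexp j := by
    intro j
    apply mul_nonneg (by positivity)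
    apply Finset.sum_nonneg
    intro k _
    positivity
  have hCexp_mono : ∀ i j, i ≤ j → Cexp i ≤ Cexp j := by
    intro i j hij
    apply mul_le_mul_of_nonneg_left ?_ (by positivity : (0:ℤ) ≤ (e:ℤ))
    apply Finset.sum_le_sum_of_subset_of_nonneg (Finset.range_subset_range.mpr hij)
    intro k _ _
    positivity
  have hEZ : ((E : ℤ)) = (e : ℤ) * (p : ℤ) ^ n := by
    rw [hE_def]; push_cast; ring
  have hqne : q ≠ 0 := ne_of_gt hq0
  -- loss bound for the partial normalized traces
  have hRloss : ∀ j, j ≤ n → ∀ z : L, D.a (R (n - j) z) ≤ q ^ (-(Cexp j)) * D.a z := by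
    intro j
    induction j with
    | zero =>
        intro _ z
        rw [Nat.sub_zero, hRn]
        simp [hCexp_def]
    | succ j ih =>
        intro hj z
        have hj' : j ≤ n := by omega
        have hm1 : 1 ≤ n - j := by omega
        have hm2 : n - j ≤ n := by omega
        have heq : n - (j + 1) = (n - j) - 1 := by omega
        rw [heq, hR_split (n - j) hm1 hm2 z, D.a_mul, D.a_inv]
        have hwfix := hR_fix (n - j) hm2 z
        have h1 := htr (n - j) hm1 hm2 (R (n - j) z) hwfix
        have hihz := ih hj' z
        have hppow : (p : ℤ) ^ j * (p : ℤ) ^ (n - j) = (p : ℤ) ^ n := by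
          rw [← pow_add]
          congr 1
          omega
        set A : ℤ := (p : ℤ) ^ j * ((e : ℤ) * ((p : ℤ) ^ (n - j) - 1)) with hA_def
        have hG : D.a (ϖ (n - j)) ^ ((e : ℤ) * ((p : ℤ) ^ (n - j) - 1)) = q ^ A := by
          rw [hϖ_val j hj', ← zpow_natCast q (p ^ j), ← zpow_mul, hA_def]
          congr 1
        rw [hG] at h1
        have hGpos : (0 : ℝ) ≤ q ^ A := le_of_lt (zpow_pos hq0 _)
        have h2 : D.a (∑ j_1 ∈ Finset.range p, (σ ^ (p ^ (n - j - 1) * j_1)) (R (n - j) z))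
            ≤ (q ^ (-(Cexp j)) * D.a z) * q ^ A :=
          le_trans h1 (mul_le_mul_of_nonneg_right hihz hGpos)
        have hinvpos : (0 : ℝ) ≤ (D.a ((p : L)))⁻¹ := inv_nonneg.mpr hAP0.le
        have h3 := mul_le_mul_of_nonneg_left h2 hinvpos
        refine le_trans h3 (le_of_eq ?_)
        have h4 : (D.a ((p : L)))⁻¹ = q ^ (-((E : ℕ) : ℤ)) := by
          rw [hAP, ← zpow_natCast q E, zpow_neg]
        rw [h4]
        calc q ^ (-((E : ℕ) : ℤ)) * ((q ^ (-(Cexp j)) * D.a z) * q ^ A)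
            = (q ^ (-((E : ℕ) : ℤ)) * q ^ (-(Cexp j)) * q ^ A) * D.a z := by ring
          _ = q ^ (-((E : ℕ) : ℤ) + -(Cexp j) + A) * D.a z := by
              rw [← zpow_add₀ hqne, ← zpow_add₀ hqne]
          _ = q ^ (-(Cexp (j + 1))) * D.a z := by
              have hexp : -((E : ℕ) : ℤ) + -(Cexp j) + A = -(Cexp (j + 1)) := by
                rw [hCexp_succ, hEZ, hA_def, ← hppow]
                ring
              rw [hexp]
  -- the core estimate: (σ - 1)⁻¹ is bounded on the trace-zero part
  have hcore : ∀ x : L, normTrace p n σ x = 0 →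
      D.a x ≤ q ^ (-((E : ℤ) + Cexp (n - 1))) * D.a (σ x - x) := by
    intro x htx
    have hR0x : R 0 x = 0 := by rw [hR0]; exact htx
    set y : L := σ x - x with hy_def
    have hty : R 0 y = 0 := by
      rw [hy_def, hR_sub, hR_sigma, hR0x]
      simp
    have hay := D.a_nonneg y
    have hydiff : ∀ m, m + 1 ≤ n →
        D.a (R (m + 1) y - R m y) ≤ q ^ (-(Cexp (n - 1))) * D.a y := by
      intro m hm
      have hb1 : D.a (R (m + 1) y) ≤ q ^ (-(Cexp (n - (m + 1)))) * D.a y := by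
        have h := hRloss (n - (m + 1)) (by omega) y
        rwa [show n - (n - (m + 1)) = m + 1 by omega] at h
      have hmono1 : q ^ (-(Cexp (n - (m + 1)))) * D.a y ≤ q ^ (-(Cexp (n - 1))) * D.a y := by
        apply mul_le_mul_of_nonneg_right ?_ hay
        apply zpow_le_zpow_right_of_le_one₀ hq0 hq1.le
        have := hCexp_mono (n - (m + 1)) (n - 1) (by omega)
        omega
      rcases Nat.eq_zero_or_pos m with rfl | hm0
      · rw [hty, sub_zero]
        exact le_trans hb1 hmono1
      · have hb2 : D.a (R m y) ≤ q ^ (-(Cexp (n - m))) * D.a y := by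
          have h := hRloss (n - m) (by omega) y
          rwa [show n - (n - m) = m by omega] at h
        have hmono2 : q ^ (-(Cexp (n - m))) * D.a y ≤ q ^ (-(Cexp (n - 1))) * D.a y := by
          apply mul_le_mul_of_nonneg_right ?_ hay
          apply zpow_le_zpow_right_of_le_one₀ hq0 hq1.le
          have := hCexp_mono (n - m) (n - 1) (by omega)
          omega
        exact le_trans (D.a_sub _ _) (max_le (le_trans hb1 hmono1) (le_trans hb2 hmono2))
    have hpiece : ∀ m, m + 1 ≤ n →
        D.a (R (m + 1) x - R m x) ≤ (D.a ((p : L)))⁻¹ * (q ^ (-(Cexp (n - 1))) * D.a y) := by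
      intro m hm
      set z : L := R (m + 1) x - R m x with hz_def
      have hsz : σ z - z = R (m + 1) y - R m y := by
        rw [hz_def, hy_def, map_sub, hR_sub, hR_sub, hR_sigma, hR_sigma]
        ring
      have hA : (σ ^ (p ^ m * p)) z = z := by
        have hpp : p ^ m * p = p ^ (m + 1) := (pow_succ p m).symm
        rw [hpp, hz_def, map_sub, hR_fix (m + 1) hm x]
        congr 1
        have hsp : σ ^ (p ^ (m + 1)) = (σ ^ (p ^ m)) ^ p := by rw [← pow_mul, pow_succ]
        rw [hsp]
        exact my_fix_pow _ _ (hR_fix m (by omega) x) p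
      have hB : ∑ j ∈ Finset.range p, (σ ^ (p ^ m * j)) z = 0 := by
        have h1 : ∑ j ∈ Finset.range p, (σ ^ (p ^ m * j)) (R (m + 1) x)
            = (p : L) * R m x := by
          have hsplit := hR_split (m + 1) (by omega) hm x
          rw [Nat.add_sub_cancel] at hsplit
          rw [hsplit, ← mul_assoc, mul_inv_cancel₀ hpL, one_mul]
        have h2 : ∑ j ∈ Finset.range p, (σ ^ (p ^ m * j)) (R m x) = (p : L) * R m x := by
          have hterm : ∀ j, (σ ^ (p ^ m * j)) (R m x) = R m x := by
            intro j
            rw [pow_mul]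
            exact my_fix_pow _ _ (hR_fix m (by omega) x) j
          rw [Finset.sum_congr rfl fun j _ => hterm j, Finset.sum_const, Finset.card_range,
            nsmul_eq_mul]
        rw [hz_def]
        simp only [map_sub]
        rw [Finset.sum_sub_distrib, h1, h2, sub_self]
      have hbd := my_piece_bound D σ hinv (p ^ m) p z hA hB
      rw [hsz] at hbd
      have hbd2 := le_trans hbd (hydiff m hm)
      calc D.a z = (D.a ((p : L)))⁻¹ * (D.a ((p : L)) * D.a z) := by
            field_simp
        _ ≤ (D.a ((p : L)))⁻¹ * (q ^ (-(Cexp (n - 1))) * D.a y) :=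
            mul_le_mul_of_nonneg_left hbd2 (inv_nonneg.mpr hAP0.le)
    have hxsum : x = ∑ m ∈ Finset.range n, (R (m + 1) x - R m x) := by
      rw [Finset.sum_range_sub (fun m => R m x) n, hRn, hR0x, sub_zero]
    have hq0' : (0 : ℝ) < q ^ (-(Cexp (n - 1))) := zpow_pos hq0 _
    calc D.a x = D.a (∑ m ∈ Finset.range n, (R (m + 1) x - R m x)) := by rw [← hxsum]
      _ ≤ (D.a ((p : L)))⁻¹ * (q ^ (-(Cexp (n - 1))) * D.a y) := by
          apply D.a_sum_le _ _ _ (by positivity)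
          intro m hm
          exact hpiece m (Finset.mem_range.mp hm)
      _ = q ^ (-((E : ℤ) + Cexp (n - 1))) * D.a y := by
          rw [hAP, show ((q : ℝ) ^ (E : ℕ)) = q ^ ((E : ℕ) : ℤ) from (zpow_natCast q E).symm,
            ← zpow_neg, ← mul_assoc, ← zpow_add₀ hqne]
          have hee : -((E : ℕ) : ℤ) + -(Cexp (n - 1)) = -((E : ℤ) + Cexp (n - 1)) := by ring
          rw [hee]
  -- constants
  set B : ℝ := q ^ (-((E : ℤ) + Cexp (n - 1))) with hB_def
  have hB0 : 0 ≤ B := le_of_lt (zpow_pos hq0 _)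
  have hpR : (2 : ℝ) ≤ (p : ℝ) := by exact_mod_cast hp2
  have heR : (1 : ℝ) ≤ (e : ℝ) := by exact_mod_cast he1
  have hd0 : (0 : ℝ) < (p : ℝ) * ((p : ℝ) - 1) := by nlinarith
  have hC1R : (Cexp (n - 1) : ℝ) * ((p : ℝ) * ((p : ℝ) - 1)) ≤ (E : ℝ) := by
    have hgeom := geom_sum_mul (p : ℝ) (n - 1)
    have hpn : (p : ℝ) ^ (n - 1) * (p : ℝ) = (p : ℝ) ^ n := by
      rw [← pow_succ]
      congr 1
      omega
    have hCcast : (Cexp (n - 1) : ℝ) = (e : ℝ) * ∑ i ∈ Finset.range (n - 1), (p : ℝ) ^ i := by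
      rw [hCexp_def]
      push_cast
      ring
    have hER : (E : ℝ) = (e : ℝ) * (p : ℝ) ^ n := by rw [hE_def]; push_cast; ring
    set S : ℝ := ∑ i ∈ Finset.range (n - 1), (p : ℝ) ^ i with hS_def
    rw [hCcast, hER]
    calc (e : ℝ) * S * ((p : ℝ) * ((p : ℝ) - 1)) = (e : ℝ) * (p : ℝ) * (S * ((p : ℝ) - 1)) := by
          ring
      _ = (e : ℝ) * (p : ℝ) * ((p : ℝ) ^ (n - 1) - 1) := by rw [hgeom]
      _ = (e : ℝ) * ((p : ℝ) ^ (n - 1) * (p : ℝ)) - (e : ℝ) * (p : ℝ) := by ring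
      _ = (e : ℝ) * (p : ℝ) ^ n - (e : ℝ) * (p : ℝ) := by rw [hpn]
      _ ≤ (e : ℝ) * (p : ℝ) ^ n := by nlinarith
  have hBr : B ≤ D.a ((p : L)) ^ (-(1 + ((p : ℝ) * ((p : ℝ) - 1))⁻¹)) := by
    rw [hAP, ← Real.rpow_natCast q E, ← Real.rpow_mul hq0.le, hB_def,
      ← Real.rpow_intCast q (-((E : ℤ) + Cexp (n - 1)))]
    apply Real.rpow_le_rpow_of_exponent_ge hq0 hq1.le
    push_cast
    have ht : ((p : ℝ) * ((p : ℝ) - 1))⁻¹ * ((p : ℝ) * ((p : ℝ) - 1)) = 1 :=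
      inv_mul_cancel₀ (ne_of_gt hd0)
    have h5 : (Cexp (n - 1) : ℝ) ≤ (E : ℝ) * ((p : ℝ) * ((p : ℝ) - 1))⁻¹ := by
      rw [← mul_le_mul_iff_left₀ hd0]
      calc (Cexp (n - 1) : ℝ) * ((p : ℝ) * ((p : ℝ) - 1)) ≤ (E : ℝ) := hC1R
        _ = (E : ℝ) * (((p : ℝ) * ((p : ℝ) - 1))⁻¹ * ((p : ℝ) * ((p : ℝ) - 1))) := by
            rw [ht, mul_one]
        _ = (E : ℝ) * ((p : ℝ) * ((p : ℝ) - 1))⁻¹ * ((p : ℝ) * ((p : ℝ) - 1)) := by ring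
    linarith [h5]
  have hcontr : B * D.a ((p : L)) ^ 2 ≤ q := by
    have hC1Z : Cexp (n - 1) + 1 ≤ (E : ℤ) := by
      have hgeomZ := geom_sum_mul (p : ℤ) (n - 1)
      have hpnZ : (p : ℤ) ^ (n - 1) * (p : ℤ) = (p : ℤ) ^ n := by
        rw [← pow_succ]
        congr 1
        omega
      have hSZ0 : (0 : ℤ) ≤ ∑ i ∈ Finset.range (n - 1), (p : ℤ) ^ i :=
        Finset.sum_nonneg fun i _ => pow_nonneg (Int.natCast_nonneg p) i
      have hpZ2 : (2 : ℤ) ≤ (p : ℤ) := by exact_mod_cast hp2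
      have heZ : (1 : ℤ) ≤ (e : ℤ) := by exact_mod_cast he1
      have hCc : Cexp (n - 1) = (e : ℤ) * ∑ i ∈ Finset.range (n - 1), (p : ℤ) ^ i := by
        rw [hCexp_def]
      have hS_le : (∑ i ∈ Finset.range (n - 1), (p : ℤ) ^ i) ≤ (p : ℤ) ^ (n - 1) - 1 := by
        nlinarith [hgeomZ, hSZ0, mul_nonneg hSZ0 (by linarith : (0 : ℤ) ≤ (p : ℤ) - 2)]
      have hp_pos : (0 : ℤ) < (p : ℤ) ^ (n - 1) :=
        pow_pos (by exact_mod_cast hp.pos) _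
      rw [hCc, hEZ]
      nlinarith [hS_le, hpnZ, hp_pos, heZ, hpZ2,
        mul_le_mul_of_nonneg_left hS_le (by linarith : (0 : ℤ) ≤ (e : ℤ))]
    rw [hB_def, hAP, ← pow_mul,
      show ((q : ℝ) ^ (E * 2 : ℕ)) = q ^ ((E * 2 : ℕ) : ℤ) from (zpow_natCast q _).symm,
      ← zpow_add₀ hqne]
    calc q ^ (-((E : ℤ) + Cexp (n - 1)) + ((E * 2 : ℕ) : ℤ)) ≤ q ^ (1 : ℤ) := by
          apply zpow_le_zpow_right_of_le_one₀ hq0 hq1.le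
          push_cast
          linarith [hC1Z]
      _ = q := zpow_one q
  -- the main bound
  have hmain : ∀ x y : L, normTrace p n σ x = 0 → σ x - algebraMap K L lam * x = y →
      D.a x ≤ D.a ((p : L)) ^ (-(1 + ((p : ℝ) * ((p : ℝ) - 1))⁻¹)) * D.a y := by
    intro x y htx hxy
    have h1 : σ x - x = y + (algebraMap K L lam - 1) * x := by rw [← hxy]; ring
    have hlamx : D.a ((algebraMap K L lam - 1) * x) ≤ D.a ((p : L)) ^ 2 * D.a x := by
      rw [D.a_mul]
      exact mul_le_mul_of_nonneg_right hlam (D.a_nonneg x)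
    have h2 : D.a (σ x - x) ≤ max (D.a y) (D.a ((p : L)) ^ 2 * D.a x) := by
      rw [h1]
      exact le_trans (D.a_add _ _) (max_le_max le_rfl hlamx)
    have h3 := hcore x htx
    rcases le_or_gt (D.a ((p : L)) ^ 2 * D.a x) (D.a y) with hcase | hcase
    · have h4 : D.a (σ x - x) ≤ D.a y := le_trans h2 (max_le le_rfl hcase)
      have h5 : D.a x ≤ B * D.a y := le_trans h3 (mul_le_mul_of_nonneg_left h4 hB0)
      exact le_trans h5 (mul_le_mul_of_nonneg_right hBr (D.a_nonneg y))
    · have h4 : D.a (σ x - x) ≤ D.a ((p : L)) ^ 2 * D.a x := le_trans h2 (max_le hcase.le le_rfl)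
      have h5 : D.a x ≤ q * D.a x := by
        calc D.a x ≤ B * (D.a ((p : L)) ^ 2 * D.a x) :=
              le_trans h3 (mul_le_mul_of_nonneg_left h4 hB0)
          _ = (B * D.a ((p : L)) ^ 2) * D.a x := by ring
          _ ≤ q * D.a x := mul_le_mul_of_nonneg_right hcontr (D.a_nonneg x)
      have hx0 : D.a x = 0 := by nlinarith [D.a_nonneg x, hq1, h5]
      have hxz : x = 0 := by
        by_contra hne
        exact absurd hx0 (ne_of_gt (D.a_pos x hne))
      have hyz : y = 0 := by rw [← hxy, hxz]; simp
      rw [hxz, hyz, D.a_zero, mul_zero]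
  have hzero : ∀ x : L, normTrace p n σ x = 0 → σ x - algebraMap K L lam * x = 0 → x = 0 := by
    intro x htx hx
    have h := hmain x 0 htx hx
    rw [D.a_zero, mul_zero] at h
    by_contra hne
    exact absurd (le_antisymm h (D.a_nonneg x)) (ne_of_gt (D.a_pos x hne))
  -- part 1
  have hpart1 : ∀ x : L, normTrace p n σ x = 0 →
      normTrace p n σ (σ x - algebraMap K L lam * x) = 0 := by
    intro x htx
    have hR0x : R 0 x = 0 := by rw [hR0]; exact htx
    have h1 : R 0 (σ x) = 0 := by rw [hR_sigma, hR0x, map_zero]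
    have h2 : R 0 (algebraMap K L lam * x) = algebraMap K L lam * R 0 x := by
      simp only [hR_def]
      have hterm : ∀ j, (σ ^ (p ^ 0 * j)) (algebraMap K L lam * x)
          = algebraMap K L lam * (σ ^ (p ^ 0 * j)) x := by
        intro j
        rw [map_mul, AlgEquiv.commutes]
      rw [Finset.sum_congr rfl fun j _ => hterm j, ← Finset.mul_sum]
      ring
    have h3 : R 0 (σ x - algebraMap K L lam * x) = 0 := by
      rw [hR_sub, h1, h2, hR0x, mul_zero, sub_zero]
    rw [← hR0]
    exact h3
  -- part 2 : bijectivity via finite-dimensional linear algebra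
  let Tlin : L →ₗ[K] L := ((p : K) ^ n)⁻¹ • (∑ j ∈ Finset.range (p ^ n), (σ ^ j).toLinearMap)
  have hTlin : ∀ z : L, Tlin z = normTrace p n σ z := by
    intro z
    simp only [Tlin, LinearMap.smul_apply, LinearMap.sum_apply, Finset.sum_apply,
      AlgEquiv.toLinearMap_apply, normTrace]
    rw [Algebra.smul_def, map_inv₀, map_pow, map_natCast]
  let Flin : L →ₗ[K] L := σ.toLinearMap - lam • LinearMap.id
  have hFlin : ∀ z : L, Flin z = σ z - algebraMap K L lam * z := by
    intro z
    simp only [Flin, LinearMap.sub_apply, LinearMap.smul_apply, LinearMap.id_apply,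
      AlgEquiv.toLinearMap_apply]
    rw [Algebra.smul_def]
  have hmemV : ∀ z : L, z ∈ LinearMap.ker Tlin ↔ normTrace p n σ z = 0 := by
    intro z
    rw [LinearMap.mem_ker, hTlin]
  have hFV : ∀ z ∈ LinearMap.ker Tlin, Flin z ∈ LinearMap.ker Tlin := by
    intro z hz
    rw [hmemV] at hz ⊢
    rw [hFlin]
    exact hpart1 z hz
  let F' : LinearMap.ker Tlin →ₗ[K] LinearMap.ker Tlin := Flin.restrict hFV
  have hinj : Function.Injective F' := by
    refine (injective_iff_map_eq_zero F').mpr ?_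
    intro z hz
    have hz1 : Flin z.1 = 0 := by
      have h := congrArg Subtype.val hz
      rwa [LinearMap.restrict_apply] at h
    rw [hFlin] at hz1
    exact Subtype.ext (hzero z.1 ((hmemV z.1).mp z.2) hz1)
  have hsurj : Function.Surjective F' := LinearMap.injective_iff_surjective.mp hinj
  refine ⟨hpart1, ?_, fun x y hx _ hxy => hmain x y hx hxy⟩
  intro y hy
  obtain ⟨x, hx⟩ := hsurj ⟨y, (hmemV y).mpr hy⟩
  have hx1 : Flin x.1 = y := by
    have h := congrArg Subtype.val hx
    rwa [LinearMap.restrict_apply] at h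
  rw [hFlin] at hx1
  refine ⟨x.1, ⟨(hmemV x.1).mp x.2, hx1⟩, ?_⟩
  rintro x' ⟨htx', hex'⟩
  have hd : normTrace p n σ (x' - x.1) = 0 := by
    rw [← hR0, hR_sub, hR0, hR0, htx', (hmemV x.1).mp x.2, sub_zero]
  have hde : σ (x' - x.1) - algebraMap K L lam * (x' - x.1) = 0 := by
    rw [map_sub]
    linear_combination hex' - hx1
  have hfin := hzero (x' - x.1) hd hde
  rwa [sub_eq_zero] at hfin
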